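/- Let (Ω,d) be a proper metric space (every closed ball is compact) satisfying Condition 2: for all x,y ∈ Ω and r,s > 0, if the open balls B_r(x) and B_s(y) are disjoint then d(x,y) ≥ r + s. Let ι be a nonempty directed set and (G_α)_{α∈ι} a decreasing (antitone) family of open subsets of Ω. Define g(t) := int ⋂_α G_α^t for t > 0 and the nucleus ġ := ⋂_α closure(G_α). Then for every t > 0 one has the upper bound g(t) ⊆ int closure( (ġ)^t ). -/

import Mathlib

open Metric

/-- Lemma 4 (estimate from above): `g t ⊆ int closure ((ġ)^t)` where
`ġ = ⋂ α closure (G α)` is the nucleus. -/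
theorem upper_bound_via_nucleus
    {Ω : Type*} [MetricSpace Ω] [ProperSpace Ω]
    (cond2 : ∀ x y : Ω, ∀ r s : ℝ, 0 < r → 0 < s →
      Metric.ball x r ∩ Metric.ball y s = ∅ → r + s ≤ dist x y)
    {ι : Type*} [Nonempty ι] [Preorder ι] [IsDirected ι (· ≤ ·)]
    (G : ι → Set Ω) (hG : ∀ α, IsOpen (G α)) (hanti : Antitone G)
    (g : ℝ → Set Ω)
    (hg : ∀ t > (0:ℝ), g t = interior (⋂ α, Metric.thickening t (G α))) :
    ∀ t > (0:ℝ),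
      g t ⊆ interior (closure (Metric.thickening t (⋂ α, closure (G α)))) := by
  intro t ht x hx
  rw [hg t ht] at hx
  obtain ⟨ε, hε, hball⟩ := Metric.isOpen_iff.mp isOpen_interior x hx
  have key : ∀ x' ∈ Metric.ball x ε,
      x' ∈ closure (Metric.thickening t (⋂ α, closure (G α))) := by
    intro x' hx'
    have hx'' : ∀ α, x' ∈ Metric.thickening t (G α) := by
      have h1 := interior_subset (hball hx')
      simpa [Set.mem_iInter] using h1
    set K : ι → Set Ω := fun α => closure (G α) ∩ Metric.closedBall x' t with hK
    have hKne : ∀ α, (K α).Nonempty := by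
      intro α
      obtain ⟨y, hyG, hyd⟩ := Metric.mem_thickening_iff.mp (hx'' α)
      exact ⟨y, subset_closure hyG, by
        simp [Metric.mem_closedBall, dist_comm y x', le_of_lt hyd]⟩
    have hKdir : Directed (· ⊇ ·) K := by
      intro α β
      obtain ⟨γ, hγα, hγβ⟩ := directed_of (· ≤ ·) α β
      refine ⟨γ, ?_, ?_⟩ <;>
        exact Set.inter_subset_inter_left _ (closure_mono (hanti ‹_›))
    have hKcl : ∀ α, IsClosed (K α) :=
      fun α => isClosed_closure.inter Metric.isClosed_closedBall
    have hKcp : ∀ α, IsCompact (K α) :=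
      fun α => (isCompact_closedBall x' t).inter_left isClosed_closure
    obtain ⟨z, hz⟩ :=
      IsCompact.nonempty_iInter_of_directed_nonempty_isCompact_isClosed K hKdir hKne hKcp hKcl
    have hznuc : z ∈ ⋂ α, closure (G α) := by
      simp only [Set.mem_iInter] at hz ⊢
      exact fun α => (hz α).1
    have hzd : dist z x' ≤ t := by
      obtain ⟨α⟩ := ‹Nonempty ι›
      have := (Set.mem_iInter.mp hz α).2
      simpa [Metric.mem_closedBall] using this
    rw [Metric.mem_closure_iff]
    intro δ hδ
    have hne : (Metric.ball x' δ ∩ Metric.ball z t).Nonempty := by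
      rcases Set.eq_empty_or_nonempty (Metric.ball x' δ ∩ Metric.ball z t) with h | h
      · exfalso
        have := cond2 x' z δ t hδ ht h
        rw [dist_comm] at hzd
        linarith
      · exact h
    obtain ⟨w, hw1, hw2⟩ := hne
    refine ⟨w, ?_, ?_⟩
    · exact Metric.mem_thickening_iff.mpr ⟨z, hznuc, by
        simpa [dist_comm] using Metric.mem_ball.mp hw2⟩
    · simpa [dist_comm] using Metric.mem_ball.mp hw1
  exact mem_interior.mpr ⟨Metric.ball x ε, key, Metric.isOpen_ball, Metric.mem_ball_self hε⟩
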